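/- Let r ≥ 1 and m ≥ 1 be integers and let S ⊆ A(r,m) be a subset containing at least one point of each color i ∈ {1,…,r}. Then S is pierced; moreover, for each i ∈ {1,…,r} there exists a real t > 0 such that t·e_i lies in the convex hull of S, where e_i denotes the i-th standard basis vector of ℝ^r. -/

import Mathlib

/-- The point `a_{i,j,k}` of the construction `A(r,m)` (indices `i,j,k` are 1-based). -/
noncomputable def pt (r m i j k : ℕ) : Fin r → ℝ := fun l =>
  if (l : ℕ) + 1 = i then
    (∑ l' ∈ Finset.Icc (j + 1) r, (m : ℝ) ^ (2 * r - 2 * l' + 3))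
      + ((r - j : ℕ) : ℝ) * (m : ℝ) + (k : ℝ)
  else if j + 1 ≤ (l : ℕ) + 1 then
    -((m : ℝ) ^ (2 * r - 2 * ((l : ℕ) + 1) + 3))
  else 0

/-- The point set `A(r,m) ⊆ ℝ^r`. -/
def Apts (r m : ℕ) : Set (Fin r → ℝ) :=
  {x | ∃ i j k : ℕ, 1 ≤ i ∧ i ≤ j ∧ j ≤ r ∧ 1 ≤ k ∧ k ≤ m ∧ x = pt r m i j k}

/-- The set `C_i` of points of `A(r,m)` of color `i`. -/
def colorSet (r m i : ℕ) : Set (Fin r → ℝ) :=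
  {x | ∃ j k : ℕ, 1 ≤ i ∧ i ≤ j ∧ j ≤ r ∧ 1 ≤ k ∧ k ≤ m ∧ x = pt r m i j k}

/-- The set `L_j` of points of `A(r,m)` of layer `j`. -/
def layerSet (r m j : ℕ) : Set (Fin r → ℝ) :=
  {x | ∃ i k : ℕ, 1 ≤ i ∧ i ≤ j ∧ j ≤ r ∧ 1 ≤ k ∧ k ≤ m ∧ x = pt r m i j k}

/-- A set `S ⊆ ℝ^r` is pierced if its convex hull meets the line `ℝ·1_r`. -/
def Pierced {r : ℕ} (S : Set (Fin r → ℝ)) : Prop :=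
  ∃ c : ℝ, (fun _ => c : Fin r → ℝ) ∈ convexHull ℝ S

/-- The `i`-th standard basis vector of `ℝ^r` (1-based index). -/
def stdVec (r i : ℕ) : Fin r → ℝ := fun l => if (l : ℕ) + 1 = i then 1 else 0

noncomputable def Pval (r m j k : ℕ) : ℝ :=
  (∑ l' ∈ Finset.Icc (j + 1) r, (m : ℝ) ^ (2 * r - 2 * l' + 3))
    + ((r - j : ℕ) : ℝ) * (m : ℝ) + (k : ℝ)

lemma Pval_pos (r m j k : ℕ) (hk : 1 ≤ k) : 0 < Pval r m j k := by
  have h1 : (0:ℝ) ≤ ∑ l' ∈ Finset.Icc (j + 1) r, (m : ℝ) ^ (2 * r - 2 * l' + 3) :=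
    Finset.sum_nonneg fun _ _ => pow_nonneg (by positivity) _
  have h2 : (0:ℝ) ≤ ((r - j : ℕ) : ℝ) * (m : ℝ) := by positivity
  have h3 : (1:ℝ) ≤ (k:ℝ) := by exact_mod_cast hk
  unfold Pval; linarith

lemma pt_eval (r m i j k : ℕ) (l : Fin r) :
    pt r m i j k l = if (l : ℕ) + 1 = i then Pval r m j k
      else if j + 1 ≤ (l : ℕ) + 1 then -((m : ℝ) ^ (2 * r - 2 * ((l:ℕ) + 1) + 3)) else 0 := rfl

lemma key (r m : ℕ) (j k : ℕ → ℕ)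
    (hj : ∀ i, 1 ≤ i → i ≤ r → i ≤ j i ∧ j i ≤ r ∧ 1 ≤ k i) :
    ∀ n s, s + n = r + 1 → 1 ≤ s → ∀ c : ℕ → ℝ, (∀ l, 0 ≤ c l) →
    ∃ lam : ℕ → ℝ, (∀ i, 0 ≤ lam i) ∧
      (s ≤ r → lam s * Pval r m (j s) (k s) = c s) ∧
      (∑ i ∈ Finset.Icc s r, lam i • pt r m i (j i) (k i))
        = fun l : Fin r => if s ≤ (l : ℕ) + 1 then c ((l : ℕ) + 1) else 0 := by
  intro n
  induction n with
  | zero =>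
    intro s hs _ c _
    refine ⟨0, fun _ => le_rfl, fun h => by omega, ?_⟩
    have he : Finset.Icc s r = ∅ := Finset.Icc_eq_empty (by omega)
    rw [he]
    funext l
    have hl : ¬ s ≤ (l : ℕ) + 1 := by have := l.isLt; omega
    simp [hl]
  | succ n ih =>
    intro s hs hs1 c hc
    have hsr : s ≤ r := by omega
    obtain ⟨hjs1, hjs2, hks⟩ := hj s hs1 hsr
    have hPs : 0 < Pval r m (j s) (k s) := Pval_pos r m _ _ hks
    set a := c s / Pval r m (j s) (k s) with ha
    have ha0 : 0 ≤ a := div_nonneg (hc s) hPs.le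
    set c' : ℕ → ℝ := fun l =>
      c l + a * (if j s + 1 ≤ l then (m : ℝ) ^ (2 * r - 2 * l + 3) else 0) with hc'def
    have hc'0 : ∀ l, 0 ≤ c' l := by
      intro l
      refine add_nonneg (hc l) (mul_nonneg ha0 ?_)
      split <;> positivity
    obtain ⟨lam', h0', _, h2'⟩ := ih (s + 1) (by omega) (by omega) c' hc'0
    refine ⟨Function.update lam' s a, ?_, ?_, ?_⟩
    · intro i
      rcases eq_or_ne i s with rfl | hne
      · simpa using ha0
      · simpa [Function.update_of_ne hne] using h0' i
    · intro _
      simp only [Function.update_self]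
      rw [ha, div_mul_cancel₀ _ hPs.ne']
    · have hins : Finset.Icc s r = insert s (Finset.Icc (s + 1) r) := by
        rw [Finset.Icc_add_one_left_eq_Ioc, Finset.Ioc_insert_left hsr]
      rw [hins, Finset.sum_insert (by simp)]
      have hcongr : ∑ i ∈ Finset.Icc (s + 1) r, Function.update lam' s a i • pt r m i (j i) (k i)
          = ∑ i ∈ Finset.Icc (s + 1) r, lam' i • pt r m i (j i) (k i) := by
        refine Finset.sum_congr rfl fun i hi => ?_
        have : i ≠ s := by simp [Finset.mem_Icc] at hi; omega
        rw [Function.update_of_ne this]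
      rw [hcongr, h2']
      funext l
      simp only [Pi.add_apply, Pi.smul_apply, Function.update_self, smul_eq_mul, pt_eval]
      rcases lt_trichotomy ((l : ℕ) + 1) s with hL | hL | hL
      · have h1 : ¬ (l : ℕ) + 1 = s := by omega
        have h2 : ¬ (j s) + 1 ≤ (l : ℕ) + 1 := by omega
        have h3 : ¬ s ≤ (l : ℕ) + 1 := by omega
        have h4 : ¬ s + 1 ≤ (l : ℕ) + 1 := by omega
        simp [h1, h2, h3, h4]
      · have h3 : s ≤ (l : ℕ) + 1 := by omega
        have h4 : ¬ s + 1 ≤ (l : ℕ) + 1 := by omega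
        simp [hL, ha, div_mul_cancel₀ (c s) hPs.ne']
      · have h1 : ¬ (l : ℕ) + 1 = s := by omega
        have h3 : s ≤ (l : ℕ) + 1 := by omega
        have h4 : s + 1 ≤ (l : ℕ) + 1 := by omega
        simp only [if_neg h1, if_pos h3, if_pos h4, hc'def]
        split <;> ring

/-- a subset of `A(r,m)` containing a point of each color is pierced,
and its convex hull meets each positive coordinate half-axis. -/
theorem all_colors_implies_pierced
    (r m : ℕ) (hr : 1 ≤ r) (hm : 1 ≤ m)
    (S : Set (Fin r → ℝ)) (hSA : S ⊆ Apts r m)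
    (hcol : ∀ i : ℕ, 1 ≤ i → i ≤ r → ∃ x ∈ S, x ∈ colorSet r m i) :
    Pierced S ∧
      ∀ i : ℕ, 1 ≤ i → i ≤ r → ∃ t : ℝ, 0 < t ∧ t • stdVec r i ∈ convexHull ℝ S := by
  classical
  have hch : ∀ i : ℕ, 1 ≤ i → i ≤ r →
      ∃ p : ℕ × ℕ, i ≤ p.1 ∧ p.1 ≤ r ∧ 1 ≤ p.2 ∧ p.2 ≤ m ∧ pt r m i p.1 p.2 ∈ S := by
    intro i h1 h2
    obtain ⟨x, hxS, j', k', _, hij, hjr, hk1, hkm, hx⟩ := hcol i h1 h2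
    exact ⟨(j', k'), hij, hjr, hk1, hkm, hx ▸ hxS⟩
  set F : ℕ → ℕ × ℕ :=
    fun i => if h : 1 ≤ i ∧ i ≤ r then (hch i h.1 h.2).choose else (i, 1) with hF
  have hFspec : ∀ i, 1 ≤ i → i ≤ r →
      i ≤ (F i).1 ∧ (F i).1 ≤ r ∧ 1 ≤ (F i).2 ∧ (F i).2 ≤ m ∧
        pt r m i (F i).1 (F i).2 ∈ S := by
    intro i h1 h2
    have h : 1 ≤ i ∧ i ≤ r := ⟨h1, h2⟩
    simp only [hF, dif_pos h]
    exact (hch i h1 h2).choose_spec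
  have hj : ∀ i, 1 ≤ i → i ≤ r →
      i ≤ (fun i => (F i).1) i ∧ (fun i => (F i).1) i ≤ r ∧ 1 ≤ (fun i => (F i).2) i := by
    intro i h1 h2
    obtain ⟨a, b, c, _, _⟩ := hFspec i h1 h2
    exact ⟨a, b, c⟩
  -- A general helper producing points in the convex hull
  have main : ∀ s : ℕ, 1 ≤ s → s ≤ r → ∀ c : ℕ → ℝ, (∀ l, 0 ≤ c l) → 0 < c s →
      ∃ Λ : ℝ, 0 < Λ ∧
        (fun l : Fin r => Λ⁻¹ * if s ≤ (l : ℕ) + 1 then c ((l : ℕ) + 1) else 0)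
          ∈ convexHull ℝ S := by
    intro s hs1 hsr c hc hcs
    obtain ⟨lam, hlam0, hlam1, hsum⟩ :=
      key r m (fun i => (F i).1) (fun i => (F i).2) hj (r + 1 - s) s (by omega) hs1 c hc
    have hPs : 0 < Pval r m (F s).1 (F s).2 :=
      Pval_pos r m _ _ (hFspec s hs1 hsr).2.2.1
    have hls : 0 < lam s := by
      have h := hlam1 hsr
      nlinarith [hlam0 s]
    have hΛ : 0 < ∑ i ∈ Finset.Icc s r, lam i :=
      lt_of_lt_of_le hls (Finset.single_le_sum (fun i _ => hlam0 i)
        (by simp [Finset.mem_Icc]; omega))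
    refine ⟨∑ i ∈ Finset.Icc s r, lam i, hΛ, ?_⟩
    have hmem : Finset.centerMass (Finset.Icc s r) lam
        (fun i => pt r m i (F i).1 (F i).2) ∈ convexHull ℝ S := by
      refine Finset.centerMass_mem_convexHull _ (fun i _ => hlam0 i) hΛ ?_
      intro i hi
      simp only [Finset.mem_Icc] at hi
      exact (hFspec i (by omega) hi.2).2.2.2.2
    have heq : Finset.centerMass (Finset.Icc s r) lam
        (fun i => pt r m i (F i).1 (F i).2)
        = fun l : Fin r => (∑ i ∈ Finset.Icc s r, lam i)⁻¹ *
            if s ≤ (l : ℕ) + 1 then c ((l : ℕ) + 1) else 0 := by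
      unfold Finset.centerMass
      rw [hsum]
      funext l
      simp [smul_eq_mul]
    rwa [heq] at hmem
  constructor
  · obtain ⟨Λ, hΛ, hmem⟩ := main 1 le_rfl hr (fun _ => 1) (fun _ => zero_le_one) one_pos
    refine ⟨Λ⁻¹, ?_⟩
    have : (fun l : Fin r => Λ⁻¹ * if 1 ≤ (l : ℕ) + 1 then (1:ℝ) else 0)
        = (fun _ => Λ⁻¹ : Fin r → ℝ) := by
      funext l; simp
    rwa [this] at hmem
  · intro i0 h1 h2
    have hP : 0 < Pval r m (F i0).1 (F i0).2 :=
      Pval_pos r m _ _ (hFspec i0 h1 h2).2.2.1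
    obtain ⟨Λ, hΛ, hmem⟩ := main i0 h1 h2
      (fun l => if l = i0 then Pval r m (F i0).1 (F i0).2 else 0)
      (fun l => by split <;> [exact hP.le; exact le_rfl])
      (by simp [hP])
    refine ⟨Λ⁻¹ * Pval r m (F i0).1 (F i0).2, by positivity, ?_⟩
    have : (fun l : Fin r => Λ⁻¹ *
          if i0 ≤ (l : ℕ) + 1 then
            (if (l : ℕ) + 1 = i0 then Pval r m (F i0).1 (F i0).2 else 0) else 0)
        = (Λ⁻¹ * Pval r m (F i0).1 (F i0).2) • stdVec r i0 := by
      funext l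
      simp only [Pi.smul_apply, stdVec, smul_eq_mul]
      rcases eq_or_ne ((l : ℕ) + 1) i0 with h | h
      · simp [h]
      · simp [h]
    rwa [this] at hmem
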